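/- Let G be a finite simple graph on n vertices that admits a proper 2-coloring. Suppose there is a vertex x of G such that for every proper 2-coloring c of G, the color class containing x is strictly larger than the other color class. Then G has at least ⌊n/2⌋ edges. -/

import Mathlib

/-- Lemma A.1: if a graph `G` on `n` vertices admits a proper 2-coloring and some
vertex `x` lies in the strictly larger color class of every proper 2-coloring,
then `G` has at least `⌊n/2⌋` edges. -/
theorem stmt_0 (n : ℕ) (G : SimpleGraph (Fin n)) [DecidableRel G.Adj]
    (hcol : ∃ c : Fin n → Bool, ∀ u v, G.Adj u v → c u ≠ c v)
    (x : Fin n)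
    (hx : ∀ c : Fin n → Bool, (∀ u v, G.Adj u v → c u ≠ c v) →
      (Finset.univ.filter fun v => c v ≠ c x).card <
      (Finset.univ.filter fun v => c v = c x).card) :
    n / 2 ≤ G.edgeFinset.card := by
  classical
  obtain ⟨c₀, hc₀⟩ := hcol
  -- choose a proper coloring minimizing the size of x's color class
  set S : Set ℕ := {k | ∃ c : Fin n → Bool, (∀ u v, G.Adj u v → c u ≠ c v) ∧
      (Finset.univ.filter fun v => c v = c x).card = k} with hSdef
  have hS : S.Nonempty := ⟨_, c₀, hc₀, rfl⟩
  obtain ⟨c, hc, hck⟩ := Nat.sInf_mem hS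
  have hmin : ∀ c' : Fin n → Bool, (∀ u v, G.Adj u v → c' u ≠ c' v) →
      (Finset.univ.filter fun v => c v = c x).card ≤
      (Finset.univ.filter fun v => c' v = c' x).card := by
    intro c' hc'
    rw [hck]
    exact Nat.sInf_le ⟨c', hc', rfl⟩
  set A : Finset (Fin n) := Finset.univ.filter fun v => c v = c x with hA
  set B : Finset (Fin n) := Finset.univ.filter fun v => c v ≠ c x with hB
  have hAB : B.card < A.card := hx c hc
  have hABn : A.card + B.card = n := by
    rw [hA, hB]
    rw [Finset.card_filter_add_card_filter_not]
    simp
  -- every vertex of A other than x has a neighbor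
  have hnbr : ∀ v ∈ A.erase x, (G.neighborFinset v).Nonempty := by
    intro v hv
    obtain ⟨hvx, hvA⟩ := Finset.mem_erase.mp hv
    by_contra hno
    rw [Finset.not_nonempty_iff_eq_empty] at hno
    have hiso : ∀ w, ¬ G.Adj v w := by
      intro w hw
      have : w ∈ G.neighborFinset v := by simpa using hw
      simp [hno] at this
    set c' : Fin n → Bool := Function.update c v (!c v) with hc'def
    have hc' : ∀ u w, G.Adj u w → c' u ≠ c' w := by
      intro u w huw
      have hu : u ≠ v := fun h => hiso w (h ▸ huw)
      have hw : w ≠ v := fun h => hiso u (h ▸ huw.symm)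
      simp only [hc'def, Function.update_of_ne hu, Function.update_of_ne hw]
      exact hc u w huw
    have hfx : c' x = c x := Function.update_of_ne (Ne.symm hvx) _ _
    have hfilter : (Finset.univ.filter fun w => c' w = c' x) = A.erase v := by
      ext w
      simp only [Finset.mem_filter, Finset.mem_univ, true_and, Finset.mem_erase, hA]
      rw [hfx]
      by_cases hwv : w = v
      · subst hwv
        have hcw : c w = c x := by simpa [hA] using hvA
        simp only [hc'def, Function.update_self]
        simp [hcw]
      · simp only [hc'def, Function.update_of_ne hwv]
        simp [hwv]
    have hle := hmin c' hc'
    rw [hfilter, Finset.card_erase_of_mem (by simpa [hA] using hvA)] at hle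
    have hApos : 0 < A.card := Finset.card_pos.mpr ⟨v, hvA⟩
    omega
  -- inject A.erase x into the edge set
  have hinj : (A.erase x).card ≤ G.edgeFinset.card := by
    set F : Fin n → Fin n := fun v =>
      if h : (G.neighborFinset v).Nonempty then h.choose else v with hF
    apply Finset.card_le_card_of_injOn (fun v => s(v, F v))
    · intro v hv
      have hne := hnbr v hv
      have hFv : F v ∈ G.neighborFinset v := by
        simp only [hF, dif_pos hne]
        exact hne.choose_spec
      rw [Finset.mem_coe, SimpleGraph.mem_edgeFinset]
      exact (SimpleGraph.mem_neighborFinset _ _ _).mp hFv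
    · intro v₁ hv₁ v₂ hv₂ heq
      have hadj : ∀ v ∈ A.erase x, G.Adj v (F v) := by
        intro v hv
        have hne := hnbr v hv
        have hFv : F v ∈ G.neighborFinset v := by
          simp only [hF, dif_pos hne]
          exact hne.choose_spec
        exact (SimpleGraph.mem_neighborFinset _ _ _).mp hFv
      have hcA : ∀ v ∈ A.erase x, c v = c x := by
        intro v hv
        have := (Finset.mem_erase.mp hv).2
        simpa [hA] using this
      rw [Sym2.eq_iff] at heq
      rcases heq with ⟨h1, _⟩ | ⟨h1, h2⟩
      · exact h1
      · exfalso
        have hadj12 : G.Adj v₁ v₂ := by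
          have := hadj v₂ hv₂
          rw [← h1] at this
          exact this.symm
        have := hc v₁ v₂ hadj12
        rw [hcA v₁ hv₁, hcA v₂ hv₂] at this
        exact this rfl
  have hxA : x ∈ A := by simp [hA]
  rw [Finset.card_erase_of_mem hxA] at hinj
  omega
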